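/- Let A be a complex n×n positive semidefinite matrix. Then the trace of the real part of A is at least the trace norm (sum of singular values) of the imaginary part of A: tr(Re A) ≥ ‖Im A‖₁. -/

import Mathlib

set_option linter.unusedSectionVars false
set_option linter.unusedTactic false

open Matrix ComplexOrder

/-- The trace norm (sum of singular values) of a matrix over `𝕜 = ℝ` or `ℂ`. -/
noncomputable def traceNorm {n : Type*} [Fintype n] [DecidableEq n] {𝕜 : Type*} [RCLike 𝕜]
    (M : Matrix n n 𝕜) : ℝ :=
  RCLike.re (Matrix.trace
    (((Matrix.isHermitian_conjTranspose_mul_self M).eigenvectorUnitary : Matrix n n 𝕜) *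
      diagonal ((↑) ∘ (√·) ∘ (Matrix.isHermitian_conjTranspose_mul_self M).eigenvalues) *
      (star (Matrix.isHermitian_conjTranspose_mul_self M).eigenvectorUnitary : Matrix n n 𝕜)))

/-- The entrywise real part of a complex matrix. -/
def rePart {n : Type*} (A : Matrix n n ℂ) : Matrix n n ℝ := fun i j => (A i j).re

/-- The entrywise imaginary part of a complex matrix. -/
def imPart {n : Type*} (A : Matrix n n ℂ) : Matrix n n ℝ := fun i j => (A i j).im

section aux
variable {n : Type*} [Fintype n] [DecidableEq n]

lemma bg_psd_diag_re {M : Matrix n n ℂ} (hM : M.PosSemidef) (i : n) :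
    0 ≤ (M i i).re := by
  have := hM.diag_nonneg (i := i)
  exact (Complex.nonneg_iff.mp this).1

lemma bg_map_conjTranspose (M : Matrix n n ℝ) :
    (M.map (Complex.ofReal))ᴴ = Mᵀ.map Complex.ofReal := by
  ext i j; simp [conjTranspose_apply]

lemma bg_map_mul (M N : Matrix n n ℝ) :
    (M * N).map (Complex.ofReal) = M.map Complex.ofReal * N.map Complex.ofReal :=
  Matrix.map_mul (f := Complex.ofRealHom)

lemma bg_map_trace (M : Matrix n n ℝ) :
    (M.map (Complex.ofReal)).trace = Complex.ofReal M.trace := by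
  simp [Matrix.trace, Matrix.diag, map_sum]

lemma bg_map_posSemidef {M : Matrix n n ℝ} (hM : M.PosSemidef) :
    (M.map (Complex.ofReal)).PosSemidef := by
  have hs := hM.1.spectral_theorem
  rw [Unitary.conjStarAlgAut_apply, star_eq_conjTranspose,
    conjTranspose_eq_transpose_of_trivial] at hs
  rw [hs, bg_map_mul, bg_map_mul, ← bg_map_conjTranspose]
  apply PosSemidef.mul_mul_conjTranspose_same
  rw [diagonal_map (by simp)]
  refine posSemidef_diagonal_iff.mpr fun i => ?_
  exact Complex.zero_le_real.mpr (hM.eigenvalues_nonneg i)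

end aux

/-- Belavkin–Grishanin inequality: for `A ⪰ 0`, `tr(Re A) ≥ ‖Im A‖₁`. -/
theorem belavkin_grishanin {n : Type*} [Fintype n] [DecidableEq n]
    (A : Matrix n n ℂ) (hA : A.PosSemidef) :
    traceNorm (imPart A) ≤ Matrix.trace (rePart A) := by
  classical
  -- notation
  let B' : Matrix n n ℂ := (imPart A).map Complex.ofReal
  let R' : Matrix n n ℂ := (rePart A).map Complex.ofReal
  let H : Matrix n n ℂ := Complex.I • B'
  -- Hermitian structure of A
  have happ : ∀ i j, A i j = star (A j i) := fun i j => (congrFun (congrFun hA.1 i) j).symm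
  have hBanti : (imPart A)ᵀ = -(imPart A) := by
    ext i j
    simp only [transpose_apply, Matrix.neg_apply, imPart]
    rw [happ j i]
    simp
  have hRsym : (rePart A)ᵀ = rePart A := by
    ext i j
    simp only [transpose_apply, rePart]
    rw [happ j i]
    simp
  have hB'T : B'ᴴ = -B' := by
    show ((imPart A).map Complex.ofReal)ᴴ = -B'
    rw [bg_map_conjTranspose, hBanti]
    ext i j
    simp [B']
  have hB'Tt : B'ᵀ = -B' := by
    ext i j
    have := congrFun (congrFun hBanti i) j
    simp only [transpose_apply, Matrix.neg_apply] at this ⊢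
    simp only [B', map_apply, this, Complex.ofReal_neg]
  have hR'Tt : R'ᵀ = R' := by
    ext i j
    have := congrFun (congrFun hRsym i) j
    simp only [transpose_apply] at this ⊢
    simp only [R', map_apply, this]
  have hA_eq : A = R' + H := by
    ext i j
    simp only [Matrix.add_apply, Matrix.smul_apply, R', H, B', map_apply, rePart, imPart, smul_eq_mul]
    rw [mul_comm]
    exact (Complex.re_add_im (A i j)).symm
  have hAT_eq : Aᵀ = R' - H := by
    have hHT : Hᵀ = -H := by
      show (Complex.I • B')ᵀ = -(Complex.I • B')
      rw [transpose_smul, hB'Tt, smul_neg]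
    rw [hA_eq, transpose_add, hHT, hR'Tt, sub_eq_add_neg]
  -- H is Hermitian
  have hH : H.IsHermitian := by
    show (Complex.I • B')ᴴ = Complex.I • B'
    rw [conjTranspose_smul, hB'T]
    ext i j
    simp [Complex.star_def, Complex.conj_I]
  -- spectral data
  let U : Matrix n n ℂ := (hH.eigenvectorUnitary : Matrix n n ℂ)
  let lam : n → ℝ := hH.eigenvalues
  let D : Matrix n n ℂ := diagonal (Complex.ofReal ∘ lam)
  let D' : Matrix n n ℂ := diagonal (Complex.ofReal ∘ fun i => |lam i|)
  let S : Matrix n n ℂ := U * D' * Uᴴ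
  have hUstar : Uᴴ * U = 1 := by
    rw [← star_eq_conjTranspose]
    exact mem_unitaryGroup_iff'.mp hH.eigenvectorUnitary.2
  have hUstar' : U * Uᴴ = 1 := by
    rw [← star_eq_conjTranspose]
    exact mem_unitaryGroup_iff.mp hH.eigenvectorUnitary.2
  have hspec : Uᴴ * H * U = D := by
    have := hH.conjStarAlgAut_star_eigenvectorUnitary
    rw [Unitary.conjStarAlgAut_apply, Unitary.coe_star, star_star, star_eq_conjTranspose] at this
    exact this
  have hHspec : H = U * D * Uᴴ := by
    have := hH.spectral_theorem
    rwa [Unitary.conjStarAlgAut_apply, star_eq_conjTranspose] at this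
  have cancel : ∀ X : Matrix n n ℂ, Uᴴ * (U * X) = X := by
    intro X
    rw [← Matrix.mul_assoc, hUstar, Matrix.one_mul]
  have hD'psd : D'.PosSemidef := by
    refine posSemidef_diagonal_iff.mpr fun i => ?_
    exact Complex.zero_le_real.mpr (abs_nonneg _)
  have hSpsd : S.PosSemidef := hD'psd.mul_mul_conjTranspose_same U
  -- S ^ 2 = B'ᴴ * B'
  have hD'sq : D' * D' = D * D := by
    show diagonal _ * diagonal _ = diagonal _ * diagonal _
    rw [diagonal_mul_diagonal, diagonal_mul_diagonal]
    congr 1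
    funext i
    simp only [Function.comp_apply, ← Complex.ofReal_mul, abs_mul_abs_self]
  have hSsq : S ^ 2 = B'ᴴ * B' := by
    have h1 : S ^ 2 = U * (D' * (D' * Uᴴ)) := by
      show (U * D' * Uᴴ) ^ 2 = _
      rw [pow_two]
      simp only [Matrix.mul_assoc]
      rw [cancel]
    have h2 : H * H = U * (D * (D * Uᴴ)) := by
      rw [hHspec]
      simp only [Matrix.mul_assoc]
      rw [cancel]
    have h3 : H * H = B'ᴴ * B' := by
      show (Complex.I • B') * (Complex.I • B') = B'ᴴ * B'
      rw [hB'T, smul_mul_assoc, mul_smul_comm, smul_smul, Complex.I_mul_I]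
      ext i j
      simp
    have h4 : U * (D' * (D' * Uᴴ)) = U * (D * (D * Uᴴ)) := by
      rw [show U * (D' * (D' * Uᴴ)) = U * (D' * D') * Uᴴ by simp only [Matrix.mul_assoc],
        show U * (D * (D * Uᴴ)) = U * (D * D) * Uᴴ by simp only [Matrix.mul_assoc], hD'sq]
    rw [h1, h4, ← h2, h3]
  -- traceNorm (imPart A) = ∑ |lam i|
  have htn : traceNorm (imPart A) = ∑ i, |lam i| := by
    have hK := isHermitian_conjTranspose_mul_self (imPart A)
    have h1 : traceNorm (imPart A) = ∑ i, √(hK.eigenvalues i) := by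
      simp only [traceNorm]
      rw [trace_mul_cycle, Unitary.coe_star_mul_self, Matrix.one_mul, trace_diagonal]
      simp
    have hmap : ((imPart A)ᴴ * imPart A).map Complex.ofReal = H ^ 2 := by
      have h3 : ((imPart A)ᴴ * imPart A).map Complex.ofReal = B'ᴴ * B' := by
        rw [bg_map_mul]
        congr 1
        show ((imPart A)ᴴ).map Complex.ofReal = B'ᴴ
        rw [bg_map_conjTranspose]
        ext i j
        simp [conjTranspose_apply, B', map_apply]
      have h3' : H * H = B'ᴴ * B' := by
        show (Complex.I • B') * (Complex.I • B') = B'ᴴ * B'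
        rw [hB'T, smul_mul_assoc, mul_smul_comm, smul_smul, Complex.I_mul_I]
        ext i j
        simp
      rw [pow_two, h3', h3]
    have hc1 : (((imPart A)ᴴ * imPart A).map Complex.ofReal).charpoly =
        ∏ i, (Polynomial.X - Polynomial.C ((hK.eigenvalues i : ℂ))) := by
      rw [show ((imPart A)ᴴ * imPart A).map Complex.ofReal =
        ((imPart A)ᴴ * imPart A).map Complex.ofRealHom from rfl, charpoly_map, hK.charpoly_eq,
        Polynomial.map_prod]
      simp
    have hc2 : (H ^ 2).charpoly = ∏ i, (Polynomial.X - Polynomial.C (((lam i ^ 2 : ℝ)) : ℂ)) := by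
      rw [← cfc_pow_id (R := ℝ) H 2 hH]
      exact hH.charpoly_cfc_eq (fun x => x ^ 2)
    have hr : ∀ g : n → ℂ, (∏ i, (Polynomial.X - Polynomial.C (g i))).roots =
        Multiset.map g Finset.univ.val := by
      intro g
      rw [Finset.prod_eq_multiset_prod]
      have := Polynomial.roots_multiset_prod_X_sub_C (Multiset.map g Finset.univ.val)
      rw [Multiset.map_map] at this
      exact this
    have hms : Multiset.map (fun i => ((hK.eigenvalues i : ℝ) : ℂ)) Finset.univ.val =
        Multiset.map (fun i => (((lam i ^ 2 : ℝ)) : ℂ)) Finset.univ.val := by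
      rw [← hr, ← hr, ← hc1, ← hc2, hmap]
    have hms2 := congrArg (fun s => (s.map (fun z : ℂ => √z.re)).sum) hms
    simp only [Multiset.map_map, Function.comp_def, Complex.ofReal_re, Real.sqrt_sq_eq_abs] at hms2
    rw [h1]
    exact hms2
  -- the congruated matrices
  let M : Matrix n n ℂ := Uᴴ * R' * U
  have hM1 : (M + D).PosSemidef := by
    have h0 : (R' + H).PosSemidef := hA_eq ▸ hA
    have h1 := h0.conjTranspose_mul_mul_same U
    rwa [Matrix.mul_add, Matrix.add_mul, hspec] at h1
  have hM2 : (M - D).PosSemidef := by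
    have h0 : (R' - H).PosSemidef := hAT_eq ▸ hA.transpose
    have h1 := h0.conjTranspose_mul_mul_same U
    rwa [Matrix.mul_sub, Matrix.sub_mul, hspec] at h1
  have hkey : ∀ i, |lam i| ≤ (M i i).re := by
    intro i
    have h1 := bg_psd_diag_re hM1 i
    have h2 := bg_psd_diag_re hM2 i
    have hD_ii : (D i i).re = lam i := by
      show ((diagonal (Complex.ofReal ∘ lam)) i i).re = lam i
      rw [diagonal_apply_eq]
      simp
    rw [Matrix.add_apply, Complex.add_re, hD_ii] at h1
    rw [Matrix.sub_apply, Complex.sub_re, hD_ii] at h2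
    rw [abs_le]
    constructor <;> linarith
  -- sum up
  have htrace : ∑ i, (M i i).re = Matrix.trace (rePart A) := by
    have h1 : M.trace = R'.trace := by
      show (Uᴴ * R' * U).trace = R'.trace
      rw [trace_mul_cycle, hUstar', Matrix.one_mul]
    have h2 : R'.trace = Complex.ofReal (Matrix.trace (rePart A)) := bg_map_trace _
    have h4 : (M.trace).re = Matrix.trace (rePart A) := by
      rw [h1, h2]
      simp
    rw [← h4, Matrix.trace, Complex.re_sum]
    rfl
  calc traceNorm (imPart A) = ∑ i, |lam i| := htn
    _ ≤ ∑ i, (M i i).re := Finset.sum_le_sum fun i _ => hkey i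
    _ = Matrix.trace (rePart A) := htrace
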